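/- Let H be a complex Hilbert space and Q ∈ B(H) an idempotent. Then: (i) s(2P_{ran Q} − Q) = m(Q); and (ii) ‖s(Q) − m(Q)‖ ≤ ‖P_{ran Q} − Q‖. -/

import Mathlib

/- For an idempotent `Q` on a complex Hilbert space `H`, we define (in `B(H)`):
the orthogonal projection onto the closure of the range of an operator,
the range projection `P_{ran Q} = Q (Q + Q* - 1)⁻¹`,
`|Q*| = (Q Q*)^{1/2}`, its Moore-Penrose inverse
`|Q*|^† = (P_{ran Q} P_{ran Q*} P_{ran Q})^{1/2}`,
the matched projection `m(Q) = (1/2)(|Q*| + Q*) |Q*|^† (|Q*| + 1)⁻¹ (|Q*| + Q)`,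
and the supplementary projection `s(Q) = m(2 P_{ran Q} - Q)`. -/

noncomputable section

namespace QPP

variable {H : Type*} [NormedAddCommGroup H] [InnerProductSpace ℂ H] [CompleteSpace H]

/-- The orthogonal projection onto the closure of the range of `T`, as an element of `B(H)`. -/
def closRangeProj (T : H →L[ℂ] H) : H →L[ℂ] H :=
  letI K := (LinearMap.range (T : H →ₗ[ℂ] H)).topologicalClosure
  haveI : CompleteSpace K := (LinearMap.range (T : H →ₗ[ℂ] H)).isClosed_topologicalClosure.completeSpace_coe
  K.subtypeL ∘L K.orthogonalProjection

/-- The range projection `P_{ran Q} = Q (Q + Q* - 1)⁻¹` of an idempotent `Q`.  (For an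
idempotent `Q` the operator `Q + Q* - 1` is invertible, so `Ring.inverse` is its inverse.) -/
def rangeProj (Q : H →L[ℂ] H) : H →L[ℂ] H :=
  Q * Ring.inverse (Q + star Q - 1)

/-- `|Q*| = (Q Q*)^{1/2}`. -/
def absStar (Q : H →L[ℂ] H) : H →L[ℂ] H :=
  CFC.sqrt (Q * star Q)

/-- `|Q*|^† = (P_{ran Q} P_{ran Q*} P_{ran Q})^{1/2}`, the Moore-Penrose inverse of `|Q*|`. -/
def absStarPinv (Q : H →L[ℂ] H) : H →L[ℂ] H :=
  CFC.sqrt (rangeProj Q * rangeProj (star Q) * rangeProj Q)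

/-- The matched projection `m(Q) = (1/2)(|Q*| + Q*) |Q*|^† (|Q*| + 1)⁻¹ (|Q*| + Q)`. -/
def matchedProj (Q : H →L[ℂ] H) : H →L[ℂ] H :=
  (2 : ℂ)⁻¹ • ((absStar Q + star Q) * absStarPinv Q * Ring.inverse (absStar Q + 1)
      * (absStar Q + Q))

/-- The supplementary projection `s(Q) = m(2 P_{ran Q} - Q)`. -/
def suppProj (Q : H →L[ℂ] H) : H →L[ℂ] H :=
  matchedProj (2 * rangeProj Q - Q)

end QPP

namespace QPPAux
open scoped NNReal
open QPP

set_option synthInstance.maxHeartbeats 1000000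
set_option maxHeartbeats 4000000

variable {H : Type*} [NormedAddCommGroup H] [InnerProductSpace ℂ H] [CompleteSpace H]

/-! ### Commuting with the continuous functional calculus -/

lemma commute_cfcHom_real {a b : H →L[ℂ] H} (ha : IsSelfAdjoint a) (hb : Commute b a)
    (g : C(spectrum ℝ a, ℝ)) : Commute b (cfcHom ha g) := by
  have hcont : Continuous (cfcHom ha (R := ℝ)) := (cfcHom_isClosedEmbedding ha).continuous
  induction g using ContinuousMap.induction_on_of_compact with
  | const r =>
    have h : (ContinuousMap.const (spectrum ℝ a) r) = algebraMap ℝ C(spectrum ℝ a, ℝ) r := rfl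
    rw [h, AlgHomClass.commutes]
    exact (Algebra.commutes r b).symm
  | id => rw [cfcHom_id ha]; exact hb
  | star_id =>
    have h : star (ContinuousMap.restrict (spectrum ℝ a) (ContinuousMap.id ℝ))
        = ContinuousMap.restrict (spectrum ℝ a) (ContinuousMap.id ℝ) := star_trivial _
    rw [h, cfcHom_id ha]; exact hb
  | add f g hf hg => rw [map_add]; exact hf.add_right hg
  | mul f g hf hg => rw [map_mul]; exact hf.mul_right hg
  | frequently f hf =>
    have hclosed : IsClosed {g : C(spectrum ℝ a, ℝ) | Commute b (cfcHom ha g)} := by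
      have h2 : IsClosed {x : H →L[ℂ] H | b * x = x * b} :=
        isClosed_eq (continuous_mul_left b) (continuous_mul_right b)
      exact h2.preimage hcont
    exact hclosed.closure_subset (mem_closure_iff_frequently.mpr hf)

lemma commute_cfc_real {a b : H →L[ℂ] H} (ha : IsSelfAdjoint a) (hb : Commute b a) (f : ℝ → ℝ) :
    Commute b (cfc f a) :=
  cfc_cases (fun x => Commute b x) a f (Commute.zero_right b)
    (fun _ ha' => commute_cfcHom_real ha' hb _)

lemma commute_sqrt {a b : H →L[ℂ] H} (ha : 0 ≤ a) (hb : Commute b a) :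
    Commute b (CFC.sqrt a) := by
  rw [CFC.sqrt_eq_cfc, cfc_nnreal_eq_real (⇑NNReal.sqrt) a ha]
  exact commute_cfc_real (.of_nonneg ha) hb _

lemma commute_ringInverse {a b : H →L[ℂ] H} (hb : Commute b a) (ha : IsUnit a) :
    Commute b (Ring.inverse a) := by
  obtain ⟨u, rfl⟩ := ha
  rw [Ring.inverse_unit]
  exact hb.units_inv_right

/-! ### `Q + Q* - 1` is invertible -/

variable {Q : H →L[ℂ] H} (hQ : IsIdempotentElem Q)

include hQ in
lemma isUnit_S : IsUnit (Q + star Q - 1) := by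
  set S := Q + star Q - 1 with hS
  set u := 2 * Q - 1 with hu
  have hu2 : u * u = 1 := by
    have h1 : u * u = 4 * (Q * Q) - 4 * Q + 1 := by rw [hu]; noncomm_ring
    rw [h1, hQ.eq]; noncomm_ring
  have hsu : star u * star u = 1 := by
    rw [← star_mul, hu2, star_one]
  have h2S : 2 * S = u + star u := by
    rw [hS, hu]; simp only [star_sub, star_mul, star_one, star_ofNat]
    noncomm_ring
  have hsq : (2 * S) * (2 * S) = 1 + 1 + (u * star u + star u * u) := by
    rw [h2S, add_mul, mul_add, mul_add, hu2, hsu]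
    abel
  have hle : (1 : H →L[ℂ] H) ≤ (2 * S) * (2 * S) := by
    rw [hsq]
    calc (1 : H →L[ℂ] H) ≤ 1 + 1 := le_add_of_nonneg_right zero_le_one
      _ ≤ 1 + 1 + (u * star u + star u * u) :=
          le_add_of_nonneg_right (add_nonneg (mul_star_self_nonneg u) (star_mul_self_nonneg u))
  have hunit : IsUnit ((2 * S) * (2 * S)) :=
    CStarAlgebra.isUnit_of_le 1 hle
  obtain ⟨w, hw⟩ := hunit
  have hcomm : Commute (2 * S) ((2 * S) * (2 * S)) := by
    unfold Commute SemiconjBy; noncomm_ring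
  rw [← hw] at hcomm
  have hcomm' : Commute (2 * S) (↑w⁻¹ : H →L[ℂ] H) := hcomm.units_inv_right
  have h2Sunit : IsUnit (2 * S) := by
    refine isUnit_iff_exists.mpr ⟨(2 * S) * ↑w⁻¹, ?_, ?_⟩
    · calc (2*S) * ((2*S) * ↑w⁻¹) = ((2*S) * (2*S)) * ↑w⁻¹ := by noncomm_ring
        _ = ↑w * ↑w⁻¹ := by rw [hw]
        _ = 1 := w.mul_inv
    · calc ((2*S) * ↑w⁻¹) * (2*S) = (↑w⁻¹ * (2*S)) * (2*S) := by rw [hcomm'.eq]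
        _ = ↑w⁻¹ * ((2*S)*(2*S)) := by noncomm_ring
        _ = ↑w⁻¹ * ↑w := by rw [hw]
        _ = 1 := w.inv_mul
  obtain ⟨v, hv⟩ := h2Sunit
  have hsmul : (2:ℂ) • S = 2 * S := by
    have h : ((2:ℂ) • (1 : H →L[ℂ] H)) = 2 := by
      rw [two_smul]; exact one_add_one_eq_two
    rw [← h, smul_mul_assoc, one_mul]
  refine isUnit_iff_exists.mpr ⟨(2:ℂ) • (↑v⁻¹ : H →L[ℂ] H), ?_, ?_⟩
  · rw [mul_smul_comm, ← smul_mul_assoc, hsmul, ← hv, v.mul_inv]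
  · rw [smul_mul_assoc, ← mul_smul_comm, hsmul, ← hv, v.inv_mul]

/-! ### Basic relations for the range projection -/

include hQ in
lemma idem_star : IsIdempotentElem (star Q) := by
  unfold IsIdempotentElem
  rw [← star_mul, hQ.eq]

def invS (Q : H →L[ℂ] H) : H →L[ℂ] H := Ring.inverse (Q + star Q - 1)

include hQ

lemma S_mul_invS : (Q + star Q - 1) * invS Q = 1 :=
  Ring.mul_inverse_cancel _ (isUnit_S hQ)

lemma invS_mul_S : invS Q * (Q + star Q - 1) = 1 :=
  Ring.inverse_mul_cancel _ (isUnit_S hQ)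

omit hQ in
lemma star_invS : star (invS Q) = invS Q := by
  rw [invS, ← Ring.inverse_star]
  congr 1
  simp [star_sub, star_add, add_comm]

include hQ in
lemma SQ_comm : (Q + star Q - 1) * Q = star Q * (Q + star Q - 1) := by
  rw [sub_mul, add_mul, hQ.eq, one_mul, mul_sub, mul_add, (idem_star hQ).eq, mul_one]; abel

include hQ in
lemma QS_comm : Q * (Q + star Q - 1) = (Q + star Q - 1) * star Q := by
  rw [mul_sub, mul_add, hQ.eq, mul_one, sub_mul, add_mul, (idem_star hQ).eq, one_mul]; abel

lemma r1 : Q * invS Q = invS Q * star Q :=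
  calc Q * invS Q = 1 * (Q * invS Q) := (one_mul _).symm
    _ = (invS Q * (Q + star Q - 1)) * (Q * invS Q) := by rw [invS_mul_S hQ]
    _ = invS Q * (((Q + star Q - 1) * Q) * invS Q) := by simp only [mul_assoc]
    _ = invS Q * ((star Q * (Q + star Q - 1)) * invS Q) := by rw [SQ_comm hQ]
    _ = invS Q * (star Q * ((Q + star Q - 1) * invS Q)) := by simp only [mul_assoc]
    _ = invS Q * star Q := by rw [S_mul_invS hQ, mul_one]

lemma r2 : invS Q * Q = star Q * invS Q :=
  calc invS Q * Q = (invS Q * Q) * 1 := (mul_one _).symm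
    _ = (invS Q * Q) * ((Q + star Q - 1) * invS Q) := by rw [S_mul_invS hQ]
    _ = invS Q * ((Q * (Q + star Q - 1)) * invS Q) := by simp only [mul_assoc]
    _ = invS Q * (((Q + star Q - 1) * star Q) * invS Q) := by rw [QS_comm hQ]
    _ = (invS Q * (Q + star Q - 1)) * (star Q * invS Q) := by simp only [mul_assoc]
    _ = star Q * invS Q := by rw [invS_mul_S hQ, one_mul]

include hQ in
lemma Q_mul_S : Q * (Q + star Q - 1) = Q * star Q := by
  rw [mul_sub, mul_add, hQ.eq, mul_one]; abel

omit hQ in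
lemma rangeProj_eq : rangeProj Q = Q * invS Q := rfl

lemma star_P : star (rangeProj Q) = rangeProj Q := by
  rw [rangeProj_eq, star_mul, star_invS, ← r1 hQ]

lemma Q_mul_P : Q * rangeProj Q = rangeProj Q := by
  rw [rangeProj_eq, ← mul_assoc, hQ.eq]

lemma P_mul_Q : rangeProj Q * Q = Q := by
  rw [rangeProj_eq, mul_assoc, r2 hQ, ← mul_assoc Q (star Q) (invS Q), ← Q_mul_S hQ,
    mul_assoc Q (Q + star Q - 1) (invS Q), S_mul_invS hQ, mul_one]

lemma P_idem : IsIdempotentElem (rangeProj Q) := by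
  unfold IsIdempotentElem
  rw [rangeProj_eq]
  calc (Q * invS Q) * (Q * invS Q) = Q * ((invS Q * Q) * invS Q) := by simp only [mul_assoc]
    _ = Q * ((star Q * invS Q) * invS Q) := by rw [r2 hQ]
    _ = (Q * star Q) * (invS Q * invS Q) := by simp only [mul_assoc]
    _ = (Q * (Q + star Q - 1)) * (invS Q * invS Q) := by rw [Q_mul_S hQ]
    _ = Q * (((Q + star Q - 1) * invS Q) * invS Q) := by simp only [mul_assoc]
    _ = Q * invS Q := by rw [S_mul_invS hQ, one_mul]

lemma P_nonneg : (0:H →L[ℂ] H) ≤ rangeProj Q := by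
  have h := star_mul_self_nonneg (rangeProj Q)
  rwa [star_P hQ, (P_idem hQ).eq] at h

lemma starQ_mul_P : star Q * rangeProj Q = star Q := by
  have h := congrArg star (P_mul_Q hQ)
  rwa [star_mul, star_P hQ] at h

lemma P_mul_starQ : rangeProj Q * star Q = rangeProj Q := by
  have h := congrArg star (Q_mul_P hQ)
  rwa [star_mul, star_P hQ] at h

omit hQ in
lemma rangeProj_star_eq : rangeProj (star Q) = star Q * invS Q := by
  rw [rangeProj_eq, invS, invS]
  congr 2
  rw [star_star]
  abel

/-! ### `absStar` and `absStarPinv` -/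

omit hQ in
lemma absStar_def : absStar Q = CFC.sqrt (Q * star Q) := rfl

omit hQ in
lemma absStarPinv_def : absStarPinv Q = CFC.sqrt (rangeProj Q * rangeProj (star Q) * rangeProj Q) :=
  rfl

omit hQ in
lemma T_nonneg : (0 : H →L[ℂ] H) ≤ absStar Q := CFC.sqrt_nonneg _

omit hQ in
lemma T_sa : IsSelfAdjoint (absStar Q) := .of_nonneg T_nonneg

omit hQ in
lemma T_sq : absStar Q * absStar Q = Q * star Q :=
  CFC.sqrt_mul_sqrt_self _ (mul_star_self_nonneg Q)

lemma PP2P_nonneg : (0:H →L[ℂ] H) ≤ rangeProj Q * rangeProj (star Q) * rangeProj Q := by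
  have h : rangeProj Q * rangeProj (star Q) * rangeProj Q
      = star (rangeProj (star Q) * rangeProj Q) * (rangeProj (star Q) * rangeProj Q) := by
    rw [star_mul, star_P hQ, star_P (idem_star hQ)]
    calc rangeProj Q * rangeProj (star Q) * rangeProj Q
        = rangeProj Q * (rangeProj (star Q) * rangeProj (star Q)) * rangeProj Q := by
          rw [(P_idem (idem_star hQ)).eq]
      _ = rangeProj Q * rangeProj (star Q) * (rangeProj (star Q) * rangeProj Q) := by
          simp only [mul_assoc]
  rw [h]
  exact star_mul_self_nonneg _

lemma D_sq : absStarPinv Q * absStarPinv Q = rangeProj Q * rangeProj (star Q) * rangeProj Q :=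
  CFC.sqrt_mul_sqrt_self _ (PP2P_nonneg hQ)

omit hQ in
lemma D_nonneg : (0 : H →L[ℂ] H) ≤ absStarPinv Q := CFC.sqrt_nonneg _

omit hQ in
lemma D_sa : IsSelfAdjoint (absStarPinv Q) := .of_nonneg D_nonneg

lemma TT_mul_P : (Q * star Q) * rangeProj Q = Q * star Q := by
  rw [mul_assoc, starQ_mul_P hQ]

lemma T_mul_P : absStar Q * rangeProj Q = absStar Q := by
  have hx : star (absStar Q * (1 - rangeProj Q)) * (absStar Q * (1 - rangeProj Q)) = 0 := by
    rw [star_mul, star_sub, star_one, star_P hQ, T_sa.star_eq]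
    calc (1 - rangeProj Q) * absStar Q * (absStar Q * (1 - rangeProj Q))
        = (1 - rangeProj Q) * ((absStar Q * absStar Q) * (1 - rangeProj Q)) := by
          simp only [mul_assoc]
      _ = (1 - rangeProj Q) * ((Q * star Q) * (1 - rangeProj Q)) := by rw [T_sq]
      _ = (1 - rangeProj Q) * (Q * star Q - (Q * star Q) * rangeProj Q) := by
          rw [mul_sub, mul_one]
      _ = 0 := by rw [TT_mul_P hQ, sub_self, mul_zero]
  have h0 : absStar Q * (1 - rangeProj Q) = 0 := by
    have := (CStarRing.star_mul_self_eq_zero_iff _).mp hx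
    exact this
  rw [mul_sub, mul_one] at h0
  exact (sub_eq_zero.mp h0).symm

lemma P_mul_T : rangeProj Q * absStar Q = absStar Q := by
  have h := congrArg star (T_mul_P hQ)
  rwa [star_mul, star_P hQ, T_sa.star_eq] at h

lemma DD_mul_P : (rangeProj Q * rangeProj (star Q) * rangeProj Q) * rangeProj Q
    = rangeProj Q * rangeProj (star Q) * rangeProj Q := by
  rw [mul_assoc (rangeProj Q * rangeProj (star Q)) (rangeProj Q) (rangeProj Q), (P_idem hQ).eq]

lemma D_mul_P : absStarPinv Q * rangeProj Q = absStarPinv Q := by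
  have hx : star (absStarPinv Q * (1 - rangeProj Q)) * (absStarPinv Q * (1 - rangeProj Q)) = 0 := by
    rw [star_mul, star_sub, star_one, star_P hQ, D_sa.star_eq]
    calc (1 - rangeProj Q) * absStarPinv Q * (absStarPinv Q * (1 - rangeProj Q))
        = (1 - rangeProj Q) * ((absStarPinv Q * absStarPinv Q) * (1 - rangeProj Q)) := by
          simp only [mul_assoc]
      _ = (1 - rangeProj Q) * ((rangeProj Q * rangeProj (star Q) * rangeProj Q)
            * (1 - rangeProj Q)) := by rw [D_sq hQ]
      _ = (1 - rangeProj Q) * ((rangeProj Q * rangeProj (star Q) * rangeProj Q)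
            - (rangeProj Q * rangeProj (star Q) * rangeProj Q) * rangeProj Q) := by
          rw [mul_sub, mul_one]
      _ = 0 := by rw [DD_mul_P hQ, sub_self, mul_zero]
  have h0 : absStarPinv Q * (1 - rangeProj Q) = 0 :=
    (CStarRing.star_mul_self_eq_zero_iff _).mp hx
  rw [mul_sub, mul_one] at h0
  exact (sub_eq_zero.mp h0).symm

lemma P_mul_D : rangeProj Q * absStarPinv Q = absStarPinv Q := by
  have h := congrArg star (D_mul_P hQ)
  rwa [star_mul, star_P hQ, D_sa.star_eq] at h

lemma TT_mul_DD : (Q * star Q) * (rangeProj Q * rangeProj (star Q) * rangeProj Q)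
    = rangeProj Q := by
  calc (Q * star Q) * (rangeProj Q * rangeProj (star Q) * rangeProj Q)
      = ((Q * star Q) * rangeProj Q) * (rangeProj (star Q) * rangeProj Q) := by
        simp only [mul_assoc]
    _ = (Q * star Q) * (rangeProj (star Q) * rangeProj Q) := by rw [TT_mul_P hQ]
    _ = Q * ((star Q * rangeProj (star Q)) * rangeProj Q) := by simp only [mul_assoc]
    _ = Q * (rangeProj (star Q) * rangeProj Q) := by rw [Q_mul_P (idem_star hQ)]
    _ = Q * ((star Q * invS Q) * rangeProj Q) := by rw [rangeProj_star_eq]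
    _ = Q * ((invS Q * Q) * rangeProj Q) := by rw [← r2 hQ]
    _ = (Q * invS Q) * (Q * rangeProj Q) := by simp only [mul_assoc]
    _ = rangeProj Q * rangeProj Q := by rw [← rangeProj_eq, Q_mul_P hQ]
    _ = rangeProj Q := (P_idem hQ).eq

lemma star_PP2P : star (rangeProj Q * rangeProj (star Q) * rangeProj Q)
    = rangeProj Q * rangeProj (star Q) * rangeProj Q := by
  simp only [star_mul, star_P hQ, star_P (idem_star hQ), mul_assoc]

lemma DD_mul_TT : (rangeProj Q * rangeProj (star Q) * rangeProj Q) * (Q * star Q)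
    = rangeProj Q := by
  have h := congrArg star (TT_mul_DD hQ)
  rwa [star_mul, star_PP2P hQ, star_mul, star_star, star_P hQ] at h

lemma commute_T_D : Commute (absStar Q) (absStarPinv Q) := by
  have c0 : Commute (absStarPinv Q * absStarPinv Q) (Q * star Q) := by
    unfold Commute SemiconjBy
    rw [D_sq hQ, TT_mul_DD hQ, DD_mul_TT hQ]
  have c1 : Commute (absStarPinv Q * absStarPinv Q) (absStar Q) :=
    commute_sqrt (mul_star_self_nonneg Q) c0
  have c2 : Commute (absStar Q) (absStarPinv Q * absStarPinv Q) := c1.symm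
  rw [D_sq hQ] at c2
  exact commute_sqrt (PP2P_nonneg hQ) c2

lemma TD_nonneg : (0:H →L[ℂ] H) ≤ absStar Q * absStarPinv Q := by
  set W := CFC.sqrt (absStar Q) with hWdef
  have hW : W * W = absStar Q := CFC.sqrt_mul_sqrt_self _ T_nonneg
  have hWsa : IsSelfAdjoint W := .of_nonneg (CFC.sqrt_nonneg _)
  have hcWD : Commute (absStarPinv Q) W := commute_sqrt T_nonneg (commute_T_D hQ).symm
  have h : absStar Q * absStarPinv Q = star W * absStarPinv Q * W := by
    rw [hWsa.star_eq, ← hW]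
    calc W * W * absStarPinv Q = W * (W * absStarPinv Q) := by rw [mul_assoc]
      _ = W * (absStarPinv Q * W) := by rw [← hcWD.eq]
      _ = W * absStarPinv Q * W := by rw [mul_assoc]
  rw [h]
  exact star_left_conjugate_nonneg (D_nonneg) W

lemma T_mul_D : absStar Q * absStarPinv Q = rangeProj Q := by
  have h1 : (absStar Q * absStarPinv Q) * (absStar Q * absStarPinv Q) = rangeProj Q := by
    calc (absStar Q * absStarPinv Q) * (absStar Q * absStarPinv Q)
        = absStar Q * ((absStarPinv Q * absStar Q) * absStarPinv Q) := by simp only [mul_assoc]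
      _ = absStar Q * ((absStar Q * absStarPinv Q) * absStarPinv Q) := by
          rw [← (commute_T_D hQ).eq]
      _ = (absStar Q * absStar Q) * (absStarPinv Q * absStarPinv Q) := by simp only [mul_assoc]
      _ = rangeProj Q := by rw [T_sq, D_sq hQ, TT_mul_DD hQ]
  have h2 : CFC.sqrt (rangeProj Q) = absStar Q * absStarPinv Q :=
    CFC.sqrt_unique h1 (TD_nonneg hQ)
  have h3 : CFC.sqrt (rangeProj Q) = rangeProj Q :=
    CFC.sqrt_unique (P_idem hQ).eq (P_nonneg hQ)
  rw [← h2, h3]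

lemma D_mul_T : absStarPinv Q * absStar Q = rangeProj Q := by
  rw [← (commute_T_D hQ).eq, T_mul_D hQ]

/-! ### The resolvent `R = (T+1)⁻¹` -/

omit hQ in
lemma isUnit_T1 : IsUnit (absStar Q + 1) :=
  CStarAlgebra.isUnit_of_le 1 (le_add_of_nonneg_left T_nonneg)

omit hQ in
lemma T1_mul_R : (absStar Q + 1) * Ring.inverse (absStar Q + 1) = 1 :=
  Ring.mul_inverse_cancel _ isUnit_T1

omit hQ in
lemma R_mul_T1 : Ring.inverse (absStar Q + 1) * (absStar Q + 1) = 1 :=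
  Ring.inverse_mul_cancel _ isUnit_T1

lemma commute_P_R : Commute (rangeProj Q) (Ring.inverse (absStar Q + 1)) := by
  refine commute_ringInverse ?_ isUnit_T1
  exact Commute.add_right ((P_mul_T hQ).trans (T_mul_P hQ).symm) (Commute.one_right _)

lemma commute_D_R : Commute (absStarPinv Q) (Ring.inverse (absStar Q + 1)) := by
  refine commute_ringInverse ?_ isUnit_T1
  exact Commute.add_right ((D_mul_T hQ).trans (T_mul_D hQ).symm) (Commute.one_right _)

omit hQ in
lemma commute_T_R : Commute (absStar Q) (Ring.inverse (absStar Q + 1)) :=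
  commute_ringInverse ((Commute.refl _).add_right (Commute.one_right _)) isUnit_T1

lemma E_eq : (1 + absStarPinv Q) * Ring.inverse (absStar Q + 1)
    = 1 + absStarPinv Q - rangeProj Q := by
  have key : (1 + absStarPinv Q - rangeProj Q) * (absStar Q + 1) = 1 + absStarPinv Q := by
    rw [sub_mul, add_mul, one_mul, mul_add, mul_add, mul_one, mul_one, D_mul_T hQ, P_mul_T hQ]
    abel
  calc (1 + absStarPinv Q) * Ring.inverse (absStar Q + 1)
      = ((1 + absStarPinv Q - rangeProj Q) * (absStar Q + 1)) * Ring.inverse (absStar Q + 1) := by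
        rw [key]
    _ = (1 + absStarPinv Q - rangeProj Q) * ((absStar Q + 1) * Ring.inverse (absStar Q + 1)) := by
        rw [mul_assoc]
    _ = 1 + absStarPinv Q - rangeProj Q := by rw [T1_mul_R, mul_one]

/-! ### The reflected idempotent `Q' = 2P - Q` -/

omit hQ in
lemma two_mul_sub (X Y : H →L[ℂ] H) : 2 * X - Y = X + (X - Y) := by
  rw [two_mul]; abel

lemma star_Q' : star (2 * rangeProj Q - Q) = 2 * rangeProj Q - star Q := by
  rw [star_sub, star_mul, star_ofNat, star_P hQ, mul_two, two_mul]

lemma z_mul_P : (rangeProj Q - Q) * rangeProj Q = 0 := by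
  rw [sub_mul, (P_idem hQ).eq, Q_mul_P hQ, sub_self]

lemma P_mul_z : rangeProj Q * (rangeProj Q - Q) = rangeProj Q - Q := by
  rw [mul_sub, (P_idem hQ).eq, P_mul_Q hQ]

lemma z_mul_Q : (rangeProj Q - Q) * Q = 0 := by
  rw [sub_mul, P_mul_Q hQ, hQ.eq, sub_self]

lemma z_sq : (rangeProj Q - Q) * (rangeProj Q - Q) = 0 := by
  rw [mul_sub, z_mul_P hQ, z_mul_Q hQ, sub_self]

lemma P_mul_Q' : rangeProj Q * (2 * rangeProj Q - Q) = 2 * rangeProj Q - Q := by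
  rw [two_mul_sub, mul_add, (P_idem hQ).eq, P_mul_z hQ]

lemma Q'_mul_P : (2 * rangeProj Q - Q) * rangeProj Q = rangeProj Q := by
  rw [two_mul_sub, add_mul, (P_idem hQ).eq, z_mul_P hQ, add_zero]

lemma Q'_idem : IsIdempotentElem (2 * rangeProj Q - Q) := by
  unfold IsIdempotentElem
  rw [two_mul_sub]
  rw [mul_add, add_mul, add_mul, (P_idem hQ).eq, P_mul_z hQ, z_mul_P hQ, z_sq hQ,
    add_zero, add_zero]

lemma Q'Q'star : (2 * rangeProj Q - Q) * star (2 * rangeProj Q - Q) = Q * star Q := by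
  rw [star_Q' hQ, two_mul_sub, two_mul_sub]
  have h1 : rangeProj Q * (rangeProj Q - star Q) = 0 := by
    rw [mul_sub, (P_idem hQ).eq, P_mul_starQ hQ, sub_self]
  have h2 : (rangeProj Q - Q) * (rangeProj Q - star Q) = Q * star Q - rangeProj Q := by
    rw [sub_mul, mul_sub, mul_sub, (P_idem hQ).eq, P_mul_starQ hQ, sub_self, zero_sub,
      Q_mul_P hQ]
    abel
  rw [mul_add, add_mul, add_mul, (P_idem hQ).eq, h1, z_mul_P hQ, h2]
  abel

lemma rangeProj_Q' : rangeProj (2 * rangeProj Q - Q) = rangeProj Q := by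
  have h1 : rangeProj (2 * rangeProj Q - Q) * (2 * rangeProj Q - Q) = 2 * rangeProj Q - Q :=
    P_mul_Q (Q'_idem hQ)
  have h2 : (2 * rangeProj Q - Q) * rangeProj (2 * rangeProj Q - Q)
      = rangeProj (2 * rangeProj Q - Q) := Q_mul_P (Q'_idem hQ)
  have h3 : star (rangeProj (2 * rangeProj Q - Q)) = rangeProj (2 * rangeProj Q - Q) :=
    star_P (Q'_idem hQ)
  have h4 : rangeProj (2 * rangeProj Q - Q) * rangeProj Q = rangeProj Q := by
    calc rangeProj (2 * rangeProj Q - Q) * rangeProj Q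
        = rangeProj (2 * rangeProj Q - Q) * ((2 * rangeProj Q - Q) * rangeProj Q) := by
          rw [Q'_mul_P hQ]
      _ = (rangeProj (2 * rangeProj Q - Q) * (2 * rangeProj Q - Q)) * rangeProj Q := by
          rw [mul_assoc]
      _ = (2 * rangeProj Q - Q) * rangeProj Q := by rw [h1]
      _ = rangeProj Q := Q'_mul_P hQ
  have h5 : rangeProj Q * rangeProj (2 * rangeProj Q - Q) = rangeProj (2 * rangeProj Q - Q) := by
    calc rangeProj Q * rangeProj (2 * rangeProj Q - Q)
        = rangeProj Q * ((2 * rangeProj Q - Q) * rangeProj (2 * rangeProj Q - Q)) := by rw [h2]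
      _ = (rangeProj Q * (2 * rangeProj Q - Q)) * rangeProj (2 * rangeProj Q - Q) := by
          rw [mul_assoc]
      _ = (2 * rangeProj Q - Q) * rangeProj (2 * rangeProj Q - Q) := by rw [P_mul_Q' hQ]
      _ = rangeProj (2 * rangeProj Q - Q) := h2
  have h6 : rangeProj Q * rangeProj (2 * rangeProj Q - Q) = rangeProj Q := by
    have h := congrArg star h4
    rwa [star_mul, h3, star_P hQ] at h
  rw [← h5, h6]

lemma absStar_Q' : absStar (2 * rangeProj Q - Q) = absStar Q := by
  rw [absStar_def, absStar_def, Q'Q'star hQ]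

lemma absStarPinv_Q' : absStarPinv (2 * rangeProj Q - Q) = absStarPinv Q := by
  have hTD' : absStar (2 * rangeProj Q - Q) * absStarPinv (2 * rangeProj Q - Q)
      = rangeProj (2 * rangeProj Q - Q) := T_mul_D (Q'_idem hQ)
  rw [absStar_Q' hQ, rangeProj_Q' hQ] at hTD'
  have hPD' : rangeProj (2 * rangeProj Q - Q) * absStarPinv (2 * rangeProj Q - Q)
      = absStarPinv (2 * rangeProj Q - Q) := P_mul_D (Q'_idem hQ)
  rw [rangeProj_Q' hQ] at hPD'
  calc absStarPinv (2 * rangeProj Q - Q)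
      = rangeProj Q * absStarPinv (2 * rangeProj Q - Q) := hPD'.symm
    _ = (absStarPinv Q * absStar Q) * absStarPinv (2 * rangeProj Q - Q) := by rw [D_mul_T hQ]
    _ = absStarPinv Q * (absStar Q * absStarPinv (2 * rangeProj Q - Q)) := by rw [mul_assoc]
    _ = absStarPinv Q * rangeProj Q := by rw [hTD']
    _ = absStarPinv Q := D_mul_P hQ

/-! ### The difference identity -/

omit hQ in
lemma abstract_diff (P T D R Q : H →L[ℂ] H)
    (hPP : P * P = P) (hPQ : P * Q = Q) (hsQP : star Q * P = star Q)
    (hPstar : star P = P)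
    (hTD : T * D = P) (hDT : D * T = P) (hPT : P * T = T)
    (hPD : P * D = D) (hDP : D * P = D)
    (hPR : P * R = R * P) (hRT : R * T = T * R)
    (hE : (1 + D) * R = 1 + D - P) :
    (T + star (2 * P - Q)) * D * R * (T + (2 * P - Q)) - (T + star Q) * D * R * (T + Q)
      = 2 * (D * (P - Q)) + 2 * ((P - star Q) * D) := by
  have prod_eq : ∀ a b : H →L[ℂ] H, (T + a) * D * R * (T + b)
      = R * T + R * (P * b) + (a * P) * R + a * (D * (R * b)) := by
    intro a b
    have m1 : P * R * T = R * T := by rw [hPR, mul_assoc, hPT]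
    have m2 : P * R * b = R * (P * b) := by rw [hPR, mul_assoc]
    have m3 : a * (D * R) * T = (a * P) * R := by
      calc a * (D * R) * T = a * (D * (R * T)) := by simp only [mul_assoc]
        _ = a * (D * (T * R)) := by rw [hRT]
        _ = a * ((D * T) * R) := by rw [← mul_assoc D T R]
        _ = a * (P * R) := by rw [hDT]
        _ = (a * P) * R := by rw [← mul_assoc]
    have m4 : a * (D * R) * b = a * (D * (R * b)) := by simp only [mul_assoc]
    calc (T + a) * D * R * (T + b)
        = ((T * D) * R + a * (D * R)) * (T + b) := by
          rw [add_mul, add_mul, mul_assoc a D R]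
      _ = (P * R + a * (D * R)) * (T + b) := by rw [hTD]
      _ = (P * R * T + P * R * b) + (a * (D * R) * T + a * (D * R) * b) := by
          rw [add_mul, mul_add, mul_add]
      _ = (R * T + R * (P * b)) + ((a * P) * R + a * (D * (R * b))) := by
          rw [m1, m2, m3, m4]
      _ = R * T + R * (P * b) + (a * P) * R + a * (D * (R * b)) := by abel
  have hb' : (2 : H →L[ℂ] H) * P - Q = P + (P - Q) := two_mul_sub P Q
  have ha' : star (2 * P - Q) = P + (P - star Q) := by
    rw [star_sub, star_mul, star_ofNat, hPstar, mul_two, ← two_mul, two_mul_sub]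
  rw [ha', hb', prod_eq, prod_eq]
  have e5 : ∀ x : H →L[ℂ] H, P * (D * x) = D * x := fun x => by rw [← mul_assoc, hPD]
  have e6 : D * (R * P) = D * R := by rw [← hPR, ← mul_assoc, hDP]
  have e1 : P * (P + (P - Q)) = P + (P - Q) := by
    rw [mul_add, hPP, mul_sub, hPP, hPQ]
  have e2 : (P + (P - star Q)) * P = P + (P - star Q) := by
    rw [add_mul, hPP, sub_mul, hPP, hsQP]
  have e7 : (P + (P - star Q)) * (D * (R * (P + (P - Q))))
      = (D * R + D * (R * (P - Q))) + ((P - star Q) * (D * R)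
        + (P - star Q) * (D * (R * (P - Q)))) := by
    rw [mul_add R P (P - Q), mul_add D (R * P) (R * (P - Q)), e6, add_mul,
      mul_add P (D * R) (D * (R * (P - Q))),
      mul_add (P - star Q) (D * R) (D * (R * (P - Q))), e5 R, e5 (R * (P - Q))]
  have e8 : P * Q = P - (P - Q) := by rw [hPQ]; abel
  have e9 : star Q * P = P - (P - star Q) := by rw [hsQP]; abel
  have hQz : Q = P - (P - Q) := by abel
  have hsQz : star Q = P - (P - star Q) := by abel
  have e10 : star Q * (D * (R * Q))
      = (D * R - D * (R * (P - Q))) - ((P - star Q) * (D * R)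
        - (P - star Q) * (D * (R * (P - Q)))) := by
    calc star Q * (D * (R * Q))
        = (P - (P - star Q)) * (D * (R * (P - (P - Q)))) := by rw [← hsQz, ← hQz]
      _ = (D * R - D * (R * (P - Q))) - ((P - star Q) * (D * R)
          - (P - star Q) * (D * (R * (P - Q)))) := by
          rw [mul_sub R P (P - Q), mul_sub D (R * P) (R * (P - Q)), e6, sub_mul,
            mul_sub P (D * R) (D * (R * (P - Q))),
            mul_sub (P - star Q) (D * R) (D * (R * (P - Q))), e5 R, e5 (R * (P - Q))]
  rw [e1, e2, e7, e8, e9, e10]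
  -- key combination identities
  have c1 : R * (P - Q) + D * (R * (P - Q)) = D * (P - Q) := by
    have h : (1 + D) * (R * (P - Q)) = ((1 + D) * R) * (P - Q) := by rw [mul_assoc]
    rw [add_mul, one_mul] at h
    rw [h, hE, sub_mul, add_mul, one_mul]
    have hPz : P * (P - Q) = P - Q := by rw [mul_sub, hPP, hPQ]
    rw [hPz]
    abel
  have c2 : (P - star Q) * R + (P - star Q) * (D * R) = (P - star Q) * D := by
    have h : (P - star Q) * ((1 + D) * R) = (P - star Q) * R + (P - star Q) * (D * R) := by
      rw [add_mul, one_mul, mul_add]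
    rw [← h, hE, mul_sub, mul_add, mul_one]
    have hzP : (P - star Q) * P = P - star Q := by rw [sub_mul, hPP, hsQP]
    rw [hzP]
    abel
  rw [two_mul (D * (P - Q)), two_mul ((P - star Q) * D), ← c1, ← c2]
  rw [mul_add R P (P - Q), mul_sub R P (P - Q),
    add_mul P (P - star Q) R, sub_mul P (P - star Q) R]
  abel

/-! ### Unfolding the matched projection difference -/

lemma matched_diff : matchedProj (2 * rangeProj Q - Q) - matchedProj Q
    = absStarPinv Q * (rangeProj Q - Q) + star (absStarPinv Q * (rangeProj Q - Q)) := by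
  have habs : star (absStarPinv Q * (rangeProj Q - Q))
      = (rangeProj Q - star Q) * absStarPinv Q := by
    rw [star_mul, star_sub, star_P hQ, D_sa.star_eq]
  simp only [matchedProj]
  rw [absStar_Q' hQ, absStarPinv_Q' hQ, ← smul_sub]
  have hdiff := abstract_diff (rangeProj Q) (absStar Q) (absStarPinv Q)
    (Ring.inverse (absStar Q + 1)) Q
    (P_idem hQ).eq (P_mul_Q hQ) (starQ_mul_P hQ) (star_P hQ) (T_mul_D hQ) (D_mul_T hQ)
    (P_mul_T hQ) (P_mul_D hQ) (D_mul_P hQ) (commute_P_R hQ).eq (commute_T_R).symm.eq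
    (E_eq hQ)
  rw [hdiff, habs]
  rw [two_mul (absStarPinv Q * (rangeProj Q - Q)),
    two_mul ((rangeProj Q - star Q) * absStarPinv Q),
    ← two_smul ℂ (absStarPinv Q * (rangeProj Q - Q)),
    ← two_smul ℂ ((rangeProj Q - star Q) * absStarPinv Q), ← smul_add, smul_smul,
    inv_mul_cancel₀ (two_ne_zero), one_smul]

/-! ### Norm estimates -/

omit hQ in
lemma norm_proj_le_one {p : H →L[ℂ] H} (hidem : p * p = p) (hsa : star p = p) : ‖p‖ ≤ 1 := by
  have h : ‖p‖ * ‖p‖ = ‖p‖ := by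
    have h := CStarRing.norm_star_mul_self (x := p)
    rw [hsa, hidem] at h
    exact h.symm
  nlinarith [norm_nonneg p]

lemma norm_D_le_one : ‖absStarPinv Q‖ ≤ 1 := by
  have h : ‖absStarPinv Q‖ * ‖absStarPinv Q‖
      = ‖rangeProj Q * rangeProj (star Q) * rangeProj Q‖ := by
    have h := CStarRing.norm_star_mul_self (x := absStarPinv Q)
    rw [D_sa.star_eq, D_sq hQ] at h
    exact h.symm
  have n1 : ‖rangeProj Q‖ ≤ 1 := norm_proj_le_one (P_idem hQ).eq (star_P hQ)
  have n2 : ‖rangeProj (star Q)‖ ≤ 1 :=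
    norm_proj_le_one (P_idem (idem_star hQ)).eq (star_P (idem_star hQ))
  have hb : ‖rangeProj Q * rangeProj (star Q) * rangeProj Q‖ ≤ 1 := by
    calc ‖rangeProj Q * rangeProj (star Q) * rangeProj Q‖
        ≤ ‖rangeProj Q * rangeProj (star Q)‖ * ‖rangeProj Q‖ := norm_mul_le _ _
      _ ≤ (‖rangeProj Q‖ * ‖rangeProj (star Q)‖) * ‖rangeProj Q‖ := by
          have := norm_mul_le (rangeProj Q) (rangeProj (star Q))
          have h0 := norm_nonneg (rangeProj Q)
          nlinarith [norm_nonneg (rangeProj Q * rangeProj (star Q))]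
      _ ≤ 1 := by
          have h0 := norm_nonneg (rangeProj Q)
          have h1 := norm_nonneg (rangeProj (star Q))
          have hab : ‖rangeProj Q‖ * ‖rangeProj (star Q)‖ ≤ 1 := by nlinarith
          nlinarith [mul_nonneg h0 h1]
  nlinarith [norm_nonneg (absStarPinv Q)]

omit hQ in
lemma norm_corner {X p : H →L[ℂ] H} (hp : p * p = p) (hpsa : star p = p)
    (hPX : p * X = X) (hXP : X * p = 0) : ‖X + star X‖ ≤ ‖X‖ := by
  have hXX : X * X = 0 := by
    calc X * X = X * (p * X) := by rw [hPX]
      _ = (X * p) * X := by rw [mul_assoc]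
      _ = 0 := by rw [hXP, zero_mul]
  have hsXsX : star X * star X = 0 := by rw [← star_mul, hXX, star_zero]
  have hsaa : star (X + star X) = X + star X := by rw [star_add, star_star, add_comm]
  have haa : (X + star X) * (X + star X) = X * star X + star X * X := by
    rw [add_mul, mul_add, mul_add, hXX, hsXsX, zero_add, add_zero]
  have hc : (0:ℝ) ≤ ‖X‖ * ‖X‖ := mul_nonneg (norm_nonneg X) (norm_nonneg X)
  have hsXp : star X * p = star X := by
    have h := congrArg star hPX
    rwa [star_mul, hpsa] at h
  have hpsX : p * star X = 0 := by
    have h := congrArg star hXP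
    rwa [star_mul, hpsa, star_zero] at h
  have h1' : X * star X ≤ (‖X‖ * ‖X‖) • p := by
    have h1 : X * star X ≤ algebraMap ℝ (H →L[ℂ] H) (‖X‖ * ‖X‖) := by
      have hsa : IsSelfAdjoint (X * star X) := by
        rw [IsSelfAdjoint, star_mul, star_star]
      have h := hsa.le_algebraMap_norm_self
      rwa [CStarRing.norm_self_mul_star] at h
    have hconj := star_left_conjugate_le_conjugate h1 p
    rw [hpsa] at hconj
    have hL : p * (X * star X) * p = X * star X := by
      calc p * (X * star X) * p = ((p * X) * star X) * p := by rw [mul_assoc p X (star X)]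
        _ = X * (star X * p) := by rw [hPX, mul_assoc]
        _ = X * star X := by rw [hsXp]
    have hR : p * algebraMap ℝ (H →L[ℂ] H) (‖X‖ * ‖X‖) * p = (‖X‖ * ‖X‖) • p := by
      rw [Algebra.algebraMap_eq_smul_one, mul_smul_comm, mul_one, smul_mul_assoc, hp]
    rwa [hL, hR] at hconj
  have h2' : star X * X ≤ (‖X‖ * ‖X‖) • (1 - p) := by
    have h1 : star X * X ≤ algebraMap ℝ (H →L[ℂ] H) (‖X‖ * ‖X‖) := by
      have hsa : IsSelfAdjoint (star X * X) := by
        rw [IsSelfAdjoint, star_mul, star_star]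
      have h := hsa.le_algebraMap_norm_self
      rwa [CStarRing.norm_star_mul_self] at h
    have hconj := star_left_conjugate_le_conjugate h1 (1 - p)
    have hq : star (1 - p) = 1 - p := by rw [star_sub, star_one, hpsa]
    rw [hq] at hconj
    have hXq : X * (1 - p) = X := by rw [mul_sub, mul_one, hXP, sub_zero]
    have hqsX : (1 - p) * star X = star X := by rw [sub_mul, one_mul, hpsX, sub_zero]
    have hqq : (1 - p) * (1 - p) = 1 - p := by
      rw [mul_sub, mul_one, sub_mul, one_mul, hp]
      abel
    have hL : (1 - p) * (star X * X) * (1 - p) = star X * X := by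
      calc (1 - p) * (star X * X) * (1 - p)
          = (((1 - p) * star X) * X) * (1 - p) := by rw [mul_assoc (1-p) (star X) X]
        _ = star X * (X * (1 - p)) := by rw [hqsX, mul_assoc]
        _ = star X * X := by rw [hXq]
    have hR : (1 - p) * algebraMap ℝ (H →L[ℂ] H) (‖X‖ * ‖X‖) * (1 - p)
        = (‖X‖ * ‖X‖) • (1 - p) := by
      rw [Algebra.algebraMap_eq_smul_one, mul_smul_comm, mul_one, smul_mul_assoc, hqq]
    rwa [hL, hR] at hconj
  have hsum : (X + star X) * (X + star X) ≤ algebraMap ℝ (H →L[ℂ] H) (‖X‖ * ‖X‖) := by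
    rw [haa]
    calc X * star X + star X * X
        ≤ (‖X‖ * ‖X‖) • p + (‖X‖ * ‖X‖) • (1 - p) := add_le_add h1' h2'
      _ = (‖X‖ * ‖X‖) • (p + (1 - p)) := by rw [smul_add]
      _ = algebraMap ℝ (H →L[ℂ] H) (‖X‖ * ‖X‖) := by
          rw [Algebra.algebraMap_eq_smul_one]
          congr 1
          abel
  have h0 : (0:H →L[ℂ] H) ≤ (X + star X) * (X + star X) := by
    have h := star_mul_self_nonneg (X + star X)
    rwa [hsaa] at h
  have hnorm : ‖(X + star X) * (X + star X)‖ ≤ ‖X‖ * ‖X‖ :=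
    (CStarAlgebra.norm_le_iff_le_algebraMap _ hc h0).mpr hsum
  have hCs : ‖X + star X‖ * ‖X + star X‖ = ‖(X + star X) * (X + star X)‖ := by
    have h := CStarRing.norm_star_mul_self (x := X + star X)
    rw [hsaa] at h
    exact h.symm
  nlinarith [norm_nonneg (X + star X), norm_nonneg X]

end QPPAux


variable {H : Type*} [NormedAddCommGroup H] [InnerProductSpace ℂ H] [CompleteSpace H]

/-- For every idempotent `Q`: (i) `s(2 P_{ran Q} - Q) = m(Q)`; and
(ii) `‖s(Q) - m(Q)‖ ≤ ‖P_{ran Q} - Q‖`. -/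
theorem suppProj_reflect_and_dist (Q : H →L[ℂ] H) (hQ : IsIdempotentElem Q) :
    QPP.suppProj (2 * QPP.rangeProj Q - Q) = QPP.matchedProj Q ∧
    ‖QPP.suppProj Q - QPP.matchedProj Q‖ ≤ ‖QPP.rangeProj Q - Q‖ := by
  constructor
  · simp only [QPP.suppProj]
    rw [QPPAux.rangeProj_Q' hQ, sub_sub_cancel]
  · have hsupp : QPP.suppProj Q = QPP.matchedProj (2 * QPP.rangeProj Q - Q) := rfl
    rw [hsupp, QPPAux.matched_diff hQ]
    have hPX : QPP.rangeProj Q * (QPP.absStarPinv Q * (QPP.rangeProj Q - Q))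
        = QPP.absStarPinv Q * (QPP.rangeProj Q - Q) := by
      rw [← mul_assoc, QPPAux.P_mul_D hQ]
    have hXP : (QPP.absStarPinv Q * (QPP.rangeProj Q - Q)) * QPP.rangeProj Q = 0 := by
      rw [mul_assoc, QPPAux.z_mul_P hQ, mul_zero]
    have h1 : ‖QPP.absStarPinv Q * (QPP.rangeProj Q - Q)
        + star (QPP.absStarPinv Q * (QPP.rangeProj Q - Q))‖
        ≤ ‖QPP.absStarPinv Q * (QPP.rangeProj Q - Q)‖ :=
      QPPAux.norm_corner (QPPAux.P_idem hQ).eq (QPPAux.star_P hQ) hPX hXP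
    have h2 : ‖QPP.absStarPinv Q * (QPP.rangeProj Q - Q)‖ ≤ ‖QPP.rangeProj Q - Q‖ := by
      calc ‖QPP.absStarPinv Q * (QPP.rangeProj Q - Q)‖
          ≤ ‖QPP.absStarPinv Q‖ * ‖QPP.rangeProj Q - Q‖ := norm_mul_le _ _
        _ ≤ ‖QPP.rangeProj Q - Q‖ :=
            mul_le_of_le_one_left (norm_nonneg _) (QPPAux.norm_D_le_one hQ)
    exact le_trans h1 h2

end
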